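/- Let P > 0, s > 0, σ² > 0 be real numbers and let h, y ∈ ℂ. Then ∫_ℂ (1/(πP))·exp(−|x|²/P) · [(1/(πσ²))·exp(−|y − hx|²/σ²)]^s dx = (πσ²/s)/(πσ²)^s · exp(−|y|²/(σ²/s + |h|²P)) / (π(σ²/s + |h|²P)), where the integral is with respect to Lebesgue measure on ℂ ≅ ℝ². -/

import Mathlib

open MeasureTheory

lemma gauss_c (A : ℝ) (hA : 0 < A) (c : ℂ) :
    ∫ x : ℂ, Real.exp (-(A * ‖x - c‖ ^ 2)) = Real.pi / A := by
  rw [show (∫ x : ℂ, Real.exp (-(A * ‖x - c‖ ^ 2)))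
      = ∫ x : ℂ, (fun z : ℂ => Real.exp (-(A * ‖z‖ ^ 2))) (x - c) from rfl,
    integral_sub_right_eq_self (μ := volume) (fun z : ℂ => Real.exp (-(A * ‖z‖ ^ 2))) c]
  have key := (Complex.volume_preserving_equiv_real_prod).integral_comp
    Complex.measurableEquivRealProd.measurableEmbedding
    (fun p : ℝ × ℝ => Real.exp (-(A * p.1 ^ 2)) * Real.exp (-(A * p.2 ^ 2)))
  simp only [Complex.measurableEquivRealProd_apply] at key
  rw [show (∫ x : ℂ, Real.exp (-(A * ‖x‖ ^ 2)))
      = ∫ x : ℂ, Real.exp (-(A * x.re ^ 2)) * Real.exp (-(A * x.im ^ 2)) from by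
    congr 1; ext x
    rw [← Real.exp_add, Complex.sq_norm, Complex.normSq_apply]; ring_nf]
  rw [key, Measure.volume_eq_prod, integral_prod_mul (fun a : ℝ => Real.exp (-(A * a ^ 2)))
    (fun b : ℝ => Real.exp (-(A * b ^ 2)))]
  simp only [← neg_mul, integral_gaussian]
  exact Real.mul_self_sqrt (div_nonneg Real.pi_pos.le hA.le)

lemma sq_complete (P s σ a b hr hi yr yi : ℝ) (hP : 0 < P) (hs : 0 < s) (hσ : 0 < σ) :
    -(a ^ 2 + b ^ 2) / P + -((yr - (hr * a - hi * b)) ^ 2 + (yi - (hr * b + hi * a)) ^ 2) / σ * s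
      = -(yr ^ 2 + yi ^ 2) / (σ / s + (hr ^ 2 + hi ^ 2) * P)
        + -((1 / P + (hr ^ 2 + hi ^ 2) / (σ / s)) *
            ((a - (hr * yr + hi * yi) / (σ / s * (1 / P + (hr ^ 2 + hi ^ 2) / (σ / s)))) ^ 2
              + (b - (hr * yi - hi * yr) / (σ / s * (1 / P + (hr ^ 2 + hi ^ 2) / (σ / s)))) ^ 2)) := by
  have hM : 0 < σ / s + (hr ^ 2 + hi ^ 2) * P := by positivity
  have hA : 0 < 1 / P + (hr ^ 2 + hi ^ 2) / (σ / s) := by positivity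
  have hss : 0 < σ / s := by positivity
  field_simp
  ring

theorem stmt3 (P s σsq : ℝ) (hP : 0 < P) (hs : 0 < s) (hσ : 0 < σsq) (h y : ℂ) :
    (∫ x : ℂ, (1 / (Real.pi * P)) * Real.exp (-(‖x‖ ^ 2) / P) *
        ((1 / (Real.pi * σsq)) * Real.exp (-(‖y - h * x‖ ^ 2) / σsq)) ^ s)
      = (Real.pi * σsq / s) / (Real.pi * σsq) ^ s *
        (Real.exp (-(‖y‖ ^ 2) / (σsq / s + ‖h‖ ^ 2 * P)) /
          (Real.pi * (σsq / s + ‖h‖ ^ 2 * P))) := by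
  have hπ := Real.pi_pos
  have habs : ∀ z : ℂ, ‖z‖ ^ 2 = z.re ^ 2 + z.im ^ 2 := fun z => by
    rw [Complex.sq_norm, Complex.normSq_apply]; ring
  have hss : 0 < σsq / s := div_pos hσ hs
  have hA : 0 < 1 / P + (h.re ^ 2 + h.im ^ 2) / (σsq / s) := by positivity
  set A : ℝ := 1 / P + (h.re ^ 2 + h.im ^ 2) / (σsq / s) with hA_def
  set D : ℝ := σsq / s * A with hD_def
  set c : ℂ := ⟨(h.re * y.re + h.im * y.im) / D, (h.re * y.im - h.im * y.re) / D⟩ with hc_def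
  set B : ℝ := -(y.re ^ 2 + y.im ^ 2) / (σsq / s + (h.re ^ 2 + h.im ^ 2) * P) with hB_def
  have key : ∀ x : ℂ,
      (1 / (Real.pi * P)) * Real.exp (-(‖x‖ ^ 2) / P) *
        ((1 / (Real.pi * σsq)) * Real.exp (-(‖y - h * x‖ ^ 2) / σsq)) ^ s
      = (1 / (Real.pi * P) * (1 / (Real.pi * σsq)) ^ s * Real.exp B) *
          Real.exp (-(A * ‖x - c‖ ^ 2)) := by
    intro x
    rw [Real.mul_rpow (by positivity) (Real.exp_nonneg _), ← Real.exp_mul]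
    have hexp : Real.exp (-(‖x‖ ^ 2) / P) *
        Real.exp (-(‖y - h * x‖ ^ 2) / σsq * s)
        = Real.exp B * Real.exp (-(A * ‖x - c‖ ^ 2)) := by
      rw [← Real.exp_add, ← Real.exp_add]
      congr 1
      simp only [habs, Complex.sub_re, Complex.sub_im, Complex.mul_re, Complex.mul_im]
      show _ = B + -(A * ((x.re - (h.re * y.re + h.im * y.im) / D) ^ 2 + (x.im - (h.re * y.im - h.im * y.re) / D) ^ 2))
      rw [hD_def, hA_def]
      exact sq_complete P s σsq x.re x.im h.re h.im y.re y.im hP hs hσ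
    calc 1 / (Real.pi * P) * Real.exp (-(‖x‖ ^ 2) / P) *
          ((1 / (Real.pi * σsq)) ^ s * Real.exp (-(‖y - h * x‖ ^ 2) / σsq * s))
        = 1 / (Real.pi * P) * (1 / (Real.pi * σsq)) ^ s *
          (Real.exp (-(‖x‖ ^ 2) / P) *
            Real.exp (-(‖y - h * x‖ ^ 2) / σsq * s)) := by ring
      _ = _ := by rw [hexp]; ring
  simp only [key]
  rw [integral_const_mul, gauss_c A hA c]
  rw [habs y, habs h]
  rw [show (1 / (Real.pi * σsq)) ^ s = ((Real.pi * σsq) ^ s)⁻¹ from by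
    rw [one_div, Real.inv_rpow (by positivity)]]
  have ht : (0:ℝ) < (Real.pi * σsq) ^ s := Real.rpow_pos_of_pos (by positivity) s
  rw [hB_def, hA_def]
  have hM : (0:ℝ) < σsq / s + (h.re ^ 2 + h.im ^ 2) * P := by positivity
  field_simp
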